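/- Let $p$ be a prime and $k \geq 1$. If $p^k \nmid q_j$ and additionally either $p \mid q_j$ or $k \neq 1$, then the generalized Ramanujan sum satisfies $c_j(a, p^k) = 0$ for every $a$ with $(a, p) = 1$. -/

import Mathlib

open Finset

/-- `e(x) = e^{2πix}`. -/
noncomputable def e (x : ℂ) : ℂ := Complex.exp (2 * Real.pi * Complex.I * x)

/-- The generalized Ramanujan sum. -/
noncomputable def ramanujanC (aj : ℤ) (qj : ℕ) (a : ℤ) (q : ℕ) : ℂ :=
  ∑ k ∈ (Finset.Icc 1 q).filter
      (fun k => Nat.Coprime k q ∧ (k : ℤ) % (Nat.gcd qj q : ℤ) = aj % (Nat.gcd qj q : ℤ)),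
    e ((a : ℂ) * k / q)


lemma e_add (x y : ℂ) : e (x + y) = e x * e y := by
  simp [e, mul_add, Complex.exp_add]

lemma e_int (n : ℤ) : e n = 1 := by
  rw [e, mul_comm]
  exact Complex.exp_int_mul_two_pi_mul_I n

lemma prime_not_dvd (p : ℕ) (hp : p.Prime) (a : ℤ) (ha : Int.gcd a p = 1) :
    ¬ (p : ℤ) ∣ a := by
  intro h
  have : (p : ℤ) ∣ (Int.gcd a p : ℤ) := Int.dvd_coe_gcd h dvd_rfl
  rw [ha] at this
  have h2 := Int.le_of_dvd one_pos this
  have := hp.two_le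
  omega

lemma geo_sum (p : ℕ) (hp : p.Prime) (a : ℤ) (ha : Int.gcd a p = 1)
    (s : ℕ) (hs : 1 ≤ s) :
    ∑ t ∈ range (p ^ s), e ((a : ℂ) * t / (p ^ s : ℕ)) = 0 := by
  have hpc : ((p : ℕ) : ℂ) ≠ 0 := by exact_mod_cast hp.pos.ne'
  have hps0 : ((p ^ s : ℕ) : ℂ) ≠ 0 := by push_cast; exact pow_ne_zero s hpc
  set z : ℂ := e ((a : ℂ) / (p ^ s : ℕ)) with hz
  have hterm : ∀ t : ℕ, e ((a : ℂ) * t / (p ^ s : ℕ)) = z ^ t := by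
    intro t
    rw [hz, e, e, ← Complex.exp_nat_mul]
    congr 1
    ring
  have hzpow : z ^ (p ^ s) = 1 := by
    rw [hz, e, ← Complex.exp_nat_mul]
    have h1 : ((p ^ s : ℕ) : ℂ) * (2 * Real.pi * Complex.I * ((a : ℂ) / (p ^ s : ℕ)))
        = (a : ℤ) * (2 * Real.pi * Complex.I) := by
      field_simp
    rw [h1]
    exact Complex.exp_int_mul_two_pi_mul_I a
  have hzne : z ≠ 1 := by
    intro h
    rw [hz, e, Complex.exp_eq_one_iff] at h
    obtain ⟨n, hn⟩ := h
    have htwo : (2 * Real.pi * Complex.I : ℂ) ≠ 0 := by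
      simp [Real.pi_ne_zero, Complex.I_ne_zero]
    have h2 : (a : ℂ) / ((p ^ s : ℕ) : ℂ) = (n : ℂ) := by
      have : (2 * Real.pi * Complex.I) * ((a : ℂ) / ((p ^ s : ℕ) : ℂ))
          = (2 * Real.pi * Complex.I) * (n : ℂ) := by rw [hn]; ring
      exact mul_left_cancel₀ htwo this
    have h3 : (a : ℂ) = (n : ℂ) * ((p ^ s : ℕ) : ℂ) := by
      field_simp at h2
      push_cast at h2 ⊢
      linear_combination h2
    have h4 : a = n * (p ^ s : ℕ) := by exact_mod_cast h3
    have hpa : (p : ℤ) ∣ a := by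
      rw [h4]
      exact Dvd.dvd.mul_left (by exact_mod_cast dvd_pow_self p (by omega : s ≠ 0)) n
    exact prime_not_dvd p hp a ha hpa
  have hsum : ∑ t ∈ range (p ^ s), e ((a : ℂ) * t / (p ^ s : ℕ))
      = ∑ t ∈ range (p ^ s), z ^ t := Finset.sum_congr rfl (fun t _ => hterm t)
  rw [hsum, geom_sum_eq hzne, hzpow]
  simp

lemma ap_sum (p : ℕ) (hp : p.Prime) (a : ℤ) (ha : Int.gcd a p = 1)
    (k m : ℕ) (hmk : m < k) (r : ℤ) :
    ∑ k' ∈ (Icc 1 (p ^ k)).filter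
        (fun k' : ℕ => (k' : ℤ) % ((p ^ m : ℕ) : ℤ) = r % ((p ^ m : ℕ) : ℤ)),
      e ((a : ℂ) * k' / ((p ^ k : ℕ) : ℂ)) = 0 := by
  set g : ℕ := p ^ m with hgdef
  set M : ℕ := p ^ (k - m) with hMdef
  have hg : 0 < g := pow_pos hp.pos m
  have hM : 0 < M := pow_pos hp.pos (k - m)
  have hN : p ^ k = g * M := by
    rw [hgdef, hMdef, ← pow_add]
    congr 1
    omega
  have hgZ : (0:ℤ) < (g:ℤ) := by exact_mod_cast hg
  set s₀ : ℕ := ((r - 1) % (g:ℤ)).toNat with hs₀def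
  have hs₀cast : ((s₀ : ℕ) : ℤ) = (r - 1) % (g:ℤ) :=
    Int.toNat_of_nonneg (Int.emod_nonneg _ hgZ.ne')
  have hs₀lt : s₀ < g := by
    have := Int.emod_lt_of_pos (r - 1) hgZ
    omega
  have hset : (Icc 1 (p ^ k)).filter
        (fun k' : ℕ => (k' : ℤ) % ((g : ℕ) : ℤ) = r % ((g : ℕ) : ℤ))
      = (range M).image (fun t => 1 + s₀ + t * g) := by
    ext k'
    simp only [mem_filter, mem_Icc, mem_image, mem_range]
    constructor
    · rintro ⟨⟨h1, h2⟩, h3⟩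
      refine ⟨(k' - 1) / g, ?_, ?_⟩
      · rw [Nat.div_lt_iff_lt_mul hg]
        calc k' - 1 < p ^ k := by omega
          _ = M * g := by rw [hN]; ring
      · have e1 : (((k' - 1) % g : ℕ) : ℤ) = (r - 1) % (g:ℤ) := by
          push_cast
          have hk1 : ((k' - 1 : ℕ) : ℤ) = (k' : ℤ) - 1 := by omega
          rw [hk1, Int.sub_emod, h3, ← Int.sub_emod]
        have hmod : (k' - 1) % g = s₀ := by
          have := e1.trans hs₀cast.symm
          exact_mod_cast this
        have := Nat.mod_add_div' (k' - 1) g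
        rw [hmod] at this
        omega
    · rintro ⟨t, ht, rfl⟩
      refine ⟨⟨le_trans (Nat.le_add_right 1 s₀) (Nat.le_add_right (1 + s₀) (t * g)), ?_⟩, ?_⟩
      · calc 1 + s₀ + t * g ≤ g + t * g := Nat.add_le_add_right (by omega) (t * g)
          _ = (1 + t) * g := by ring
          _ ≤ M * g := Nat.mul_le_mul_right g (by omega)
          _ = p ^ k := by rw [hN]; ring
      · push_cast
        rw [hs₀cast, Int.add_mul_emod_self_right, Int.add_emod,
          Int.emod_emod_of_dvd _ (dvd_refl (g:ℤ)), ← Int.add_emod]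
        congr 1
        ring
  have hinj : ∀ x ∈ range M, ∀ y ∈ range M,
      1 + s₀ + x * g = 1 + s₀ + y * g → x = y := by
    intro x _ y _ hxy
    have h' : x * g = y * g := by linarith
    exact Nat.eq_of_mul_eq_mul_right hg h'
  rw [hset, Finset.sum_image hinj]
  have hgC : ((g : ℕ) : ℂ) ≠ 0 := by exact_mod_cast hg.ne'
  have hMC : ((M : ℕ) : ℂ) ≠ 0 := by exact_mod_cast hM.ne'
  have hterm : ∀ t : ℕ, e ((a : ℂ) * ((1 + s₀ + t * g : ℕ) : ℂ) / ((p ^ k : ℕ) : ℂ))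
      = e ((a : ℂ) * ((1 + s₀ : ℕ) : ℂ) / ((p ^ k : ℕ) : ℂ)) * e ((a : ℂ) * t / (M : ℂ)) := by
    intro t
    rw [← e_add]
    congr 1
    have hNC : ((p ^ k : ℕ) : ℂ) = (g : ℂ) * (M : ℂ) := by
      rw [hN]; push_cast; ring
    rw [hNC]
    push_cast
    field_simp
  calc ∑ t ∈ range M, e ((a : ℂ) * ((1 + s₀ + t * g : ℕ) : ℂ) / ((p ^ k : ℕ) : ℂ))
      = ∑ t ∈ range M, e ((a : ℂ) * ((1 + s₀ : ℕ) : ℂ) / ((p ^ k : ℕ) : ℂ))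
          * e ((a : ℂ) * t / (M : ℂ)) := Finset.sum_congr rfl (fun t _ => hterm t)
    _ = e ((a : ℂ) * ((1 + s₀ : ℕ) : ℂ) / ((p ^ k : ℕ) : ℂ))
          * ∑ t ∈ range M, e ((a : ℂ) * t / ((M : ℕ) : ℂ)) := by rw [Finset.mul_sum]
    _ = 0 := by
        rw [hMdef, geo_sum p hp a ha (k - m) (by omega), mul_zero]


theorem stmt3 (p : ℕ) (hp : p.Prime) (k : ℕ) (hk : 1 ≤ k)
    (qj : ℕ) (hqj : 1 ≤ qj) (aj : ℤ)
    (hnd : ¬ p ^ k ∣ qj) (hcond : p ∣ qj ∨ k ≠ 1)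
    (a : ℤ) (ha : Int.gcd a p = 1) :
    ramanujanC aj qj a (p ^ k) = 0 := by
  unfold ramanujanC
  set g : ℕ := Nat.gcd qj (p ^ k) with hgdef
  have hgdvd : g ∣ p ^ k := Nat.gcd_dvd_right _ _
  obtain ⟨m, hm, hgm⟩ := (Nat.dvd_prime_pow hp).mp hgdvd
  have hmk : m < k := by
    rcases Nat.lt_or_ge m k with h | h
    · exact h
    · exfalso
      apply hnd
      have hmeq : m = k := le_antisymm hm h
      rw [← hmeq, ← hgm]
      exact Nat.gcd_dvd_left _ _
  have hp2 := hp.two_le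
  by_cases hm0 : m = 0
  · -- g = 1 case
    have hg1 : g = 1 := by rw [hgm, hm0, pow_zero]
    have hk2 : 2 ≤ k := by
      rcases hcond with h | h
      · exfalso
        have hpg : p ∣ g := Nat.dvd_gcd h (dvd_pow_self p (by omega))
        rw [hg1] at hpg
        have := Nat.le_of_dvd one_pos hpg
        omega
      · omega
    have hfc : ∀ k' ∈ Icc 1 (p ^ k),
        ((Nat.Coprime k' (p ^ k) ∧ (k' : ℤ) % (g : ℤ) = aj % (g : ℤ)) ↔ ¬ p ∣ k') := by
      intro k' _
      constructor
      · rintro ⟨hcop, -⟩ hpk'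
        have hd : p ∣ Nat.gcd k' (p ^ k) := Nat.dvd_gcd hpk' (dvd_pow_self p (by omega))
        rw [hcop] at hd
        have := Nat.le_of_dvd one_pos hd
        omega
      · intro hnp
        refine ⟨Nat.Coprime.pow_right k ((hp.coprime_iff_not_dvd.mpr hnp).symm), ?_⟩
        simp [hg1]
    rw [Finset.filter_congr hfc]
    have htotal : ∑ k' ∈ Icc 1 (p ^ k), e ((a : ℂ) * k' / ((p ^ k : ℕ) : ℂ)) = 0 := by
      have h := ap_sum p hp a ha k 0 (by omega) 0
      rwa [Finset.filter_true_of_mem (by intro x _; simp)] at h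
    have hmult : ∑ k' ∈ (Icc 1 (p ^ k)).filter (fun k' => p ∣ k'),
        e ((a : ℂ) * k' / ((p ^ k : ℕ) : ℂ)) = 0 := by
      have hset : (Icc 1 (p ^ k)).filter (fun k' => p ∣ k')
          = (Icc 1 (p ^ (k - 1))).image (fun t => t * p) := by
        ext k'
        simp only [mem_filter, mem_Icc, mem_image]
        constructor
        · rintro ⟨⟨h1, h2⟩, c, rfl⟩
          refine ⟨c, ⟨?_, ?_⟩, by ring⟩
          · rcases Nat.eq_zero_or_pos c with h | h
            · subst h; simp at h1
            · exact h
          · have hpk : p ^ k = p ^ (k - 1) * p := by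
              rw [← pow_succ]
              congr 1
              omega
            have h2' : c * p ≤ p ^ (k - 1) * p := by
              calc c * p = p * c := by ring
                _ ≤ p ^ k := h2
                _ = p ^ (k - 1) * p := hpk
            exact Nat.le_of_mul_le_mul_right h2' hp.pos
        · rintro ⟨t, ⟨ht1, ht2⟩, rfl⟩
          refine ⟨⟨Nat.mul_pos ht1 hp.pos, ?_⟩, dvd_mul_left p t⟩
          have hpk : p ^ k = p ^ (k - 1) * p := by
            rw [← pow_succ]; congr 1; omega
          rw [hpk]
          exact Nat.mul_le_mul_right p ht2
      rw [hset, Finset.sum_image (by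
        intro x _ y _ hxy
        exact Nat.eq_of_mul_eq_mul_right hp.pos hxy)]
      have hterm : ∀ t : ℕ, e ((a : ℂ) * ((t * p : ℕ) : ℂ) / ((p ^ k : ℕ) : ℂ))
          = e ((a : ℂ) * t / ((p ^ (k - 1) : ℕ) : ℂ)) := by
        intro t
        congr 1
        have hpk : ((p ^ k : ℕ) : ℂ) = ((p ^ (k - 1) : ℕ) : ℂ) * (p : ℂ) := by
          push_cast
          rw [← pow_succ]
          congr 1
          omega
        have hpne : (p : ℂ) ≠ 0 := by exact_mod_cast hp.pos.ne'
        have hpkne : ((p ^ (k - 1) : ℕ) : ℂ) ≠ 0 := by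
          exact_mod_cast (pow_pos hp.pos (k - 1)).ne'
        rw [hpk]
        push_cast
        field_simp
      rw [Finset.sum_congr rfl (fun t _ => hterm t)]
      have h := ap_sum p hp a ha (k - 1) 0 (by omega) 0
      rwa [Finset.filter_true_of_mem (by intro x _; simp)] at h
    have hsplit := Finset.sum_filter_add_sum_filter_not (Icc 1 (p ^ k)) (fun k' => p ∣ k')
      (fun k' => e ((a : ℂ) * k' / ((p ^ k : ℕ) : ℂ)))
    linear_combination htotal - hmult + hsplit
  · -- m ≥ 1 case
    have hpg : p ∣ g := by rw [hgm]; exact dvd_pow_self p hm0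
    have hpgZ : (p : ℤ) ∣ (g : ℤ) := by exact_mod_cast hpg
    by_cases hpaj : (p : ℤ) ∣ aj
    · rw [Finset.filter_false_of_mem, Finset.sum_empty]
      rintro k' hk' ⟨hcop, hres⟩
      have hdvd : (g : ℤ) ∣ aj - (k' : ℤ) := Int.ModEq.dvd hres
      have h1 : (p : ℤ) ∣ aj - (k' : ℤ) := dvd_trans hpgZ hdvd
      have h2 : (p : ℤ) ∣ (k' : ℤ) := by
        have : (k' : ℤ) = aj - (aj - (k' : ℤ)) := by ring
        rw [this]
        exact dvd_sub hpaj h1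
      have h3 : p ∣ k' := by exact_mod_cast h2
      have hd : p ∣ Nat.gcd k' (p ^ k) := Nat.dvd_gcd h3 (dvd_pow_self p (by omega))
      rw [hcop] at hd
      have := Nat.le_of_dvd one_pos hd
      omega
    · have hfc : ∀ k' ∈ Icc 1 (p ^ k),
          ((Nat.Coprime k' (p ^ k) ∧ (k' : ℤ) % (g : ℤ) = aj % (g : ℤ))
            ↔ (k' : ℤ) % (g : ℤ) = aj % (g : ℤ)) := by
        intro k' _
        constructor
        · exact And.right
        · intro hres
          refine ⟨?_, hres⟩
          have hnp : ¬ p ∣ k' := by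
            intro hpk'
            apply hpaj
            have hdvd : (g : ℤ) ∣ aj - (k' : ℤ) := Int.ModEq.dvd hres
            have h1 : (p : ℤ) ∣ aj - (k' : ℤ) := dvd_trans hpgZ hdvd
            have h2 : (p : ℤ) ∣ (k' : ℤ) := by exact_mod_cast hpk'
            have : aj = (k' : ℤ) + (aj - (k' : ℤ)) := by ring
            rw [this]
            exact dvd_add h2 h1
          exact Nat.Coprime.pow_right k ((hp.coprime_iff_not_dvd.mpr hnp).symm)
      rw [Finset.filter_congr hfc]
      have h := ap_sum p hp a ha k m hmk aj
      rwa [← hgm] at h
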